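/- Let K and L be essentially small tt-categories (K not assumed rigid), let F : K → L be a tt-functor and φ = Spc(F) : Spc(L) → Spc(K) the induced map. Then the following are equivalent: (a') F detects ⊗-nilpotence of objects, i.e. F(x) ≅ 0 implies x^⊗n ≅ 0 for some n ≥ 1; (b) φ is surjective on closed points, i.e. for every closed point P of Spc(K) there exists Q ∈ Spc(L) such that φ(Q) = P. -/

import Mathlib

set_option linter.unusedSectionVars false
set_option maxHeartbeats 1000000


/-!
Basic notions of tensor-triangular geometry (Balmer), formalized from scratch:
tt-categories (pretriangulated + monoidal, with tensor exact in each variable),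
tt-ideals, prime tt-ideals, the Balmer spectrum `Spc` with its topology,
tensor powers of objects and morphisms, rigidity.
-/

open CategoryTheory Category Limits ZeroObject Pretriangulated MonoidalCategory

universe v u v' u'

namespace TT

variable (K : Type u) [Category.{v} K] [HasZeroObject K] [Preadditive K]
  [HasShift K ℤ] [∀ n : ℤ, (shiftFunctor K n).Additive] [Pretriangulated K]
  [MonoidalCategory K]

/-- The tensor is exact (triangulated) in each variable: tensoring a distinguished
triangle with an object (on either side) again yields a distinguished triangle. -/
def TensorExact : Prop :=
  ∀ (x : K) (T : Triangle K), (T ∈ distTriang K) →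
    (∃ h : x ⊗ T.obj₃ ⟶ (x ⊗ T.obj₁)⟦(1:ℤ)⟧,
      Triangle.mk (x ◁ T.mor₁) (x ◁ T.mor₂) h ∈ distTriang K) ∧
    (∃ h : T.obj₃ ⊗ x ⟶ (T.obj₁ ⊗ x)⟦(1:ℤ)⟧,
      Triangle.mk (T.mor₁ ▷ x) (T.mor₂ ▷ x) h ∈ distTriang K)

/-- Rigidity: every object `x` has a dual `x^∨`, i.e. takes part in an exact pairing
(coevaluation `η : 𝟙 ⟶ x^∨ ⊗ x` and evaluation `ε : x ⊗ x^∨ ⟶ 𝟙` satisfying the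
triangle identities, which yield the adjunction `x ⊗ - ⊣ x^∨ ⊗ -`). -/
def Rigid : Prop := ∀ x : K, ∃ xd : K, Nonempty (ExactPairing xd x)

variable {K}

/-- A tt-ideal: a (full, replete) class of objects closed under shifts, cones,
direct summands (retracts) and tensoring with arbitrary objects. -/
structure IsTTIdeal (I : Set K) : Prop where
  zero_mem : (0 : K) ∈ I
  shift_mem : ∀ (n : ℤ), ∀ x ∈ I, (x⟦n⟧ : K) ∈ I
  cone_mem : ∀ T : Triangle K, (T ∈ distTriang K) → T.obj₁ ∈ I → T.obj₂ ∈ I → T.obj₃ ∈ I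
  retract_mem : ∀ x z : K, z ∈ I → ∀ (i : x ⟶ z) (r : z ⟶ x), i ≫ r = 𝟙 x → x ∈ I
  tensor_mem : ∀ x ∈ I, ∀ y : K, x ⊗ y ∈ I
  tensor_mem' : ∀ x ∈ I, ∀ y : K, y ⊗ x ∈ I

/-- A prime tt-ideal: a proper tt-ideal `P` such that `x ⊗ y ∈ P` implies
`x ∈ P` or `y ∈ P`. -/
structure IsPrimeTTIdeal (P : Set K) extends IsTTIdeal P : Prop where
  ne_univ : P ≠ Set.univ
  mem_or_mem : ∀ x y : K, x ⊗ y ∈ P → x ∈ P ∨ y ∈ P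

variable (K) in
/-- The Balmer spectrum: the set of prime tt-ideals. -/
def Spc := {P : Set K // IsPrimeTTIdeal P}

/-- The Balmer topology on `Spc K`, generated by the basic open subsets
`U(x) = {P ∈ Spc K | x ∈ P}`. -/
instance : TopologicalSpace (Spc K) :=
  TopologicalSpace.generateFrom {U | ∃ x : K, U = {P : Spc K | x ∈ P.1}}

/-- The tt-ideal `⟨E⟩` generated by a class of objects `E`. -/
def ttIdealGen (E : Set K) : Set K := ⋂₀ {I : Set K | IsTTIdeal I ∧ E ⊆ I}

/-- `n`-fold tensor power of an object (`x^⊗0 = 𝟙`). -/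
def opow (x : K) : ℕ → K
  | 0 => 𝟙_ K
  | n + 1 => opow x n ⊗ x

/-- `n`-fold tensor power `f^⊗n` of a morphism. -/
def mpow {x y : K} (f : x ⟶ y) : ∀ n : ℕ, (opow x n ⟶ opow y n)
  | 0 => 𝟙 _
  | n + 1 => mpow f n ⊗ₘ f

end TT

open TT

namespace TT

section General

variable {C : Type u} [Category.{v} C] [HasZeroObject C] [Preadditive C]
  [HasShift C ℤ] [∀ n : ℤ, (shiftFunctor C n).Additive] [Pretriangulated C]
  [MonoidalCategory C]

lemma IsTTIdeal.mem_of_iso {I : Set C} (hI : IsTTIdeal I) {x y : C} (e : x ≅ y)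
    (hy : y ∈ I) : x ∈ I :=
  hI.retract_mem x y hy e.hom e.inv e.hom_inv_id

lemma IsTTIdeal.mem_of_isZero {I : Set C} (hI : IsTTIdeal I) {x : C} (hx : IsZero x) :
    x ∈ I :=
  hI.mem_of_iso hx.isoZero hI.zero_mem

lemma eq_univ_of_one_mem {I : Set C} (hI : IsTTIdeal I) (h : 𝟙_ C ∈ I) : I = Set.univ :=
  Set.eq_univ_of_forall fun y => hI.mem_of_iso (λ_ y).symm (hI.tensor_mem _ h y)

/-- If `y` is zero then `x ⊗ y` is zero. -/
lemma isZero_tensor_right (hC : TensorExact C) (x : C) {y : C} (hy : IsZero y) :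
    IsZero (x ⊗ y) := by
  obtain ⟨h, hd⟩ := (hC x (contractibleTriangle y) (contractible_distinguished y)).1
  have h1 : IsIso ((Triangle.mk (x ◁ (contractibleTriangle y).mor₁)
      (x ◁ (contractibleTriangle y).mor₂) h).mor₁) := by
    show IsIso (x ◁ 𝟙 y)
    rw [MonoidalCategory.whiskerLeft_id]
    infer_instance
  have hz : IsZero (x ⊗ (0 : C)) := Triangle.isZero₃_of_isIso₁ _ hd h1
  exact hz.of_iso (whiskerLeftIso x hy.isoZero)

/-- If `x` is zero then `x ⊗ y` is zero. -/
lemma isZero_tensor_left (hC : TensorExact C) (y : C) {x : C} (hx : IsZero x) :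
    IsZero (x ⊗ y) := by
  obtain ⟨h, hd⟩ := (hC y (contractibleTriangle x) (contractible_distinguished x)).2
  have h1 : IsIso ((Triangle.mk ((contractibleTriangle x).mor₁ ▷ y)
      ((contractibleTriangle x).mor₂ ▷ y) h).mor₁) := by
    show IsIso (𝟙 x ▷ y)
    rw [MonoidalCategory.id_whiskerRight]
    infer_instance
  have hz : IsZero ((0 : C) ⊗ y) := Triangle.isZero₃_of_isIso₁ _ hd h1
  exact hz.of_iso (whiskerRightIso hx.isoZero y)

lemma tensor_shift_one (hC : TensorExact C) (s t : C) :
    Nonempty (s ⊗ t⟦(1:ℤ)⟧ ≅ (s ⊗ t)⟦(1:ℤ)⟧) := by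
  have hd0 := rot_of_distTriang _ (contractible_distinguished t)
  obtain ⟨h, hd⟩ := (hC s _ hd0).1
  have h2 : IsZero ((Triangle.mk (s ◁ ((contractibleTriangle t).rotate).mor₁)
      (s ◁ ((contractibleTriangle t).rotate).mor₂) h).obj₂) := by
    dsimp [contractibleTriangle, Triangle.rotate]
    exact isZero_tensor_right hC s (isZero_zero C)
  have h3 : IsIso ((Triangle.mk (s ◁ ((contractibleTriangle t).rotate).mor₁)
      (s ◁ ((contractibleTriangle t).rotate).mor₂) h).mor₃) :=
    Triangle.isZero₂_iff_isIso₃ _ hd |>.1 h2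
  exact ⟨@asIso _ _ _ _ h h3⟩

lemma tensor_shift_neg_one (hC : TensorExact C) (s t : C) :
    Nonempty (s ⊗ t⟦(-1:ℤ)⟧ ≅ (s ⊗ t)⟦(-1:ℤ)⟧) := by
  obtain ⟨e⟩ := tensor_shift_one hC s (t⟦(-1:ℤ)⟧)
  exact ⟨(shiftShiftNeg _ 1).symm ≪≫
    (shiftFunctor C (-1:ℤ)).mapIso e.symm ≪≫
    (shiftFunctor C (-1:ℤ)).mapIso (whiskerLeftIso s (shiftNegShift t 1))⟩

lemma tensor_shift (hC : TensorExact C) (s : C) (n : ℤ) :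
    ∀ t : C, Nonempty (s ⊗ t⟦n⟧ ≅ (s ⊗ t)⟦n⟧) := by
  induction n using Int.induction_on with
  | zero =>
    intro t
    exact ⟨whiskerLeftIso s ((shiftFunctorZero C ℤ).app t) ≪≫
      ((shiftFunctorZero C ℤ).app (s ⊗ t)).symm⟩
  | succ n ih =>
    intro t
    obtain ⟨e1⟩ := ih (t⟦(1:ℤ)⟧)
    obtain ⟨e2⟩ := tensor_shift_one hC s t
    exact ⟨whiskerLeftIso s ((shiftFunctorAdd' C 1 (n:ℤ) ((n:ℤ)+1) (by omega)).app t) ≪≫ e1 ≪≫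
      (shiftFunctor C (n:ℤ)).mapIso e2 ≪≫
      ((shiftFunctorAdd' C 1 (n:ℤ) ((n:ℤ)+1) (by omega)).app (s ⊗ t)).symm⟩
  | pred n ih =>
    intro t
    obtain ⟨e1⟩ := ih (t⟦(-1:ℤ)⟧)
    obtain ⟨e2⟩ := tensor_shift_neg_one hC s t
    exact ⟨whiskerLeftIso s ((shiftFunctorAdd' C (-1) (-(n:ℤ)) (-(n:ℤ)-1) (by omega)).app t) ≪≫ e1 ≪≫
      (shiftFunctor C (-(n:ℤ))).mapIso e2 ≪≫
      ((shiftFunctorAdd' C (-1) (-(n:ℤ)) (-(n:ℤ)-1) (by omega)).app (s ⊗ t)).symm⟩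

lemma isTTIdeal_zeroIdeal (hC : TensorExact C) : IsTTIdeal {y : C | IsZero y} where
  zero_mem := isZero_zero C
  shift_mem n x hx := (shiftFunctor C n).map_isZero hx
  cone_mem T hT h1 h2 := Triangle.isZero₃_of_isZero₁₂ T hT h1 h2
  retract_mem x z hz i r hir := by
    rw [Set.mem_setOf_eq, IsZero.iff_id_eq_zero, ← hir, hz.eq_of_tgt i 0, zero_comp]
  tensor_mem x hx y := isZero_tensor_left hC y hx
  tensor_mem' x hx y := isZero_tensor_right hC y hx

lemma isTTIdeal_sInter {S : Set (Set C)} (h : ∀ I ∈ S, IsTTIdeal I) :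
    IsTTIdeal (⋂₀ S) where
  zero_mem I hI := (h I hI).zero_mem
  shift_mem n x hx I hI := (h I hI).shift_mem n x (hx I hI)
  cone_mem T hT h1 h2 I hI := (h I hI).cone_mem T hT (h1 I hI) (h2 I hI)
  retract_mem x z hz i r hir I hI := (h I hI).retract_mem x z (hz I hI) i r hir
  tensor_mem x hx y I hI := (h I hI).tensor_mem x (hx I hI) y
  tensor_mem' x hx y I hI := (h I hI).tensor_mem' x (hx I hI) y

lemma isTTIdeal_ttIdealGen (E : Set C) : IsTTIdeal (ttIdealGen E) :=
  isTTIdeal_sInter fun _ hI => hI.1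

lemma subset_ttIdealGen (E : Set C) : E ⊆ ttIdealGen E :=
  fun _ hx _ hI => hI.2 hx

lemma ttIdealGen_le {E I : Set C} (hI : IsTTIdeal I) (hE : E ⊆ I) : ttIdealGen E ⊆ I :=
  fun _ hx => hx I ⟨hI, hE⟩

variable [SymmetricCategory C]

lemma isTTIdeal_tdiv (hC : TensorExact C) {J : Set C} (hJ : IsTTIdeal J) (t : C) :
    IsTTIdeal {s : C | s ⊗ t ∈ J} where
  zero_mem := hJ.mem_of_isZero (isZero_tensor_left hC t (isZero_zero C))
  shift_mem n s hs := by
    obtain ⟨e⟩ := tensor_shift hC t n s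
    exact hJ.mem_of_iso ((β_ _ _) ≪≫ e ≪≫ (shiftFunctor C n).mapIso (β_ t s))
      (hJ.shift_mem n (s ⊗ t) hs)
  cone_mem T hT h1 h2 := by
    obtain ⟨h, hd⟩ := (hC t T hT).2
    exact hJ.cone_mem _ hd h1 h2
  retract_mem x z hz i r hir :=
    hJ.retract_mem (x ⊗ t) (z ⊗ t) hz (i ▷ t) (r ▷ t)
      (by rw [← comp_whiskerRight, hir, MonoidalCategory.id_whiskerRight])
  tensor_mem s hs y :=
    hJ.mem_of_iso ((α_ s y t) ≪≫ whiskerLeftIso s (β_ y t) ≪≫ (α_ s t y).symm)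
      (hJ.tensor_mem _ hs y)
  tensor_mem' s hs y :=
    hJ.mem_of_iso (α_ y s t) (hJ.tensor_mem' _ hs y)

lemma isTTIdeal_ldiv (hC : TensorExact C) {J : Set C} (hJ : IsTTIdeal J) (s : C) :
    IsTTIdeal {t : C | s ⊗ t ∈ J} := by
  have he : {t : C | s ⊗ t ∈ J} = {u : C | u ⊗ s ∈ J} := by
    ext u
    exact ⟨fun h => hJ.mem_of_iso (β_ u s) h, fun h => hJ.mem_of_iso (β_ s u) h⟩
  rw [he]
  exact isTTIdeal_tdiv hC hJ s

lemma tensor_mem_gen (hC : TensorExact C) {Q : Set C} (hQ : IsTTIdeal Q) (a b : C)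
    {s t : C} (hs : s ∈ ttIdealGen (Q ∪ {a})) (ht : t ∈ ttIdealGen (Q ∪ {b})) :
    s ⊗ t ∈ ttIdealGen (Q ∪ {a ⊗ b}) := by
  have hJ : IsTTIdeal (ttIdealGen (Q ∪ {a ⊗ b})) := isTTIdeal_ttIdealGen _
  have hQJ : Q ⊆ ttIdealGen (Q ∪ {a ⊗ b}) :=
    fun q hq => subset_ttIdealGen _ (Or.inl hq)
  have h1 : ttIdealGen (Q ∪ {b}) ⊆ {t' : C | a ⊗ t' ∈ ttIdealGen (Q ∪ {a ⊗ b})} := by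
    refine ttIdealGen_le (isTTIdeal_ldiv hC hJ a) ?_
    rintro u (hu | rfl)
    · exact hQJ (hQ.tensor_mem' u hu a)
    · exact subset_ttIdealGen _ (Or.inr rfl)
  have h2 : ttIdealGen (Q ∪ {a}) ⊆ {s' : C | s' ⊗ t ∈ ttIdealGen (Q ∪ {a ⊗ b})} := by
    refine ttIdealGen_le (isTTIdeal_tdiv hC hJ t) ?_
    rintro u (hu | rfl)
    · exact hQJ (hQ.tensor_mem u hu t)
    · exact h1 ht
  exact h2 hs

lemma exists_prime_disjoint (hC : TensorExact C) (S : Set C) (hne : S.Nonempty)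
    (hmul : ∀ s ∈ S, ∀ t ∈ S, ∃ u ∈ S, Nonempty (u ≅ s ⊗ t))
    (hnz : ∀ s ∈ S, ¬ IsZero s) :
    ∃ P : Set C, IsPrimeTTIdeal P ∧ ∀ s ∈ S, s ∉ P := by
  have hchain : ∀ c ⊆ {I : Set C | IsTTIdeal I ∧ ∀ s ∈ S, s ∉ I},
      IsChain (· ⊆ ·) c → c.Nonempty →
      ∃ ub ∈ {I : Set C | IsTTIdeal I ∧ ∀ s ∈ S, s ∉ I}, ∀ I ∈ c, I ⊆ ub := by
    intro c hc hchain hcne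
    obtain ⟨I0, hI0⟩ := hcne
    refine ⟨⋃₀ c, ⟨⟨?_, ?_, ?_, ?_, ?_, ?_⟩, ?_⟩, fun s hs => Set.subset_sUnion_of_mem hs⟩
    · exact ⟨I0, hI0, (hc hI0).1.zero_mem⟩
    · rintro n x ⟨I, hI, hx⟩
      exact ⟨I, hI, (hc hI).1.shift_mem n x hx⟩
    · rintro T hT ⟨I1, hI1, h1⟩ ⟨I2, hI2, h2⟩
      rcases hchain.total hI1 hI2 with h | h
      · exact ⟨I2, hI2, (hc hI2).1.cone_mem T hT (h h1) h2⟩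
      · exact ⟨I1, hI1, (hc hI1).1.cone_mem T hT h1 (h h2)⟩
    · rintro x z ⟨I, hI, hz⟩ i r hir
      exact ⟨I, hI, (hc hI).1.retract_mem x z hz i r hir⟩
    · rintro x ⟨I, hI, hx⟩ y
      exact ⟨I, hI, (hc hI).1.tensor_mem x hx y⟩
    · rintro x ⟨I, hI, hx⟩ y
      exact ⟨I, hI, (hc hI).1.tensor_mem' x hx y⟩
    · rintro s hsS ⟨I, hI, hsI⟩
      exact (hc hI).2 s hsS hsI
  obtain ⟨m, _, hmax⟩ := zorn_subset_nonempty
      {I : Set C | IsTTIdeal I ∧ ∀ s ∈ S, s ∉ I} hchain {y : C | IsZero y}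
      ⟨isTTIdeal_zeroIdeal hC, hnz⟩
  · have hm : IsTTIdeal m := hmax.1.1
    have hdisj : ∀ s ∈ S, s ∉ m := hmax.1.2
    have key : ∀ x : C, x ∉ m → ∃ s ∈ S, s ∈ ttIdealGen (m ∪ {x}) := by
      intro x hx
      by_contra hd
      push_neg at hd
      exact hx (hmax.2 ⟨isTTIdeal_ttIdealGen _, hd⟩
        (fun q hq => subset_ttIdealGen _ (Or.inl hq))
        (subset_ttIdealGen _ (Or.inr rfl)))
    refine ⟨m, ⟨hm, ?_, ?_⟩, hdisj⟩
    · intro h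
      obtain ⟨s0, hs0⟩ := hne
      exact hdisj s0 hs0 (h.symm ▸ Set.mem_univ s0)
    · intro a b hab
      by_contra hcon
      push_neg at hcon
      obtain ⟨ha, hb⟩ := hcon
      obtain ⟨s, hsS, hs⟩ := key a ha
      obtain ⟨t, htS, ht⟩ := key b hb
      have hst : s ⊗ t ∈ m := by
        refine ttIdealGen_le hm ?_ (tensor_mem_gen hC hm a b hs ht)
        rintro u (hu | rfl)
        · exact hu
        · exact hab
      obtain ⟨u, huS, ⟨e⟩⟩ := hmul s hsS t htS
      exact hdisj u huS (hm.mem_of_iso e hst)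

lemma exists_minimal_prime {P0 : Set C} (h0 : IsPrimeTTIdeal P0) :
    ∃ P : Set C, IsPrimeTTIdeal P ∧ P ⊆ P0 ∧
      ∀ Q : Set C, IsPrimeTTIdeal Q → Q ⊆ P → Q = P := by
  have hchain : ∀ c ⊆ {P : Set C | IsPrimeTTIdeal P ∧ P ⊆ P0},
      IsChain (· ⊆ ·) c → c.Nonempty →
      ∃ lb ∈ {P : Set C | IsPrimeTTIdeal P ∧ P ⊆ P0}, ∀ I ∈ c, lb ⊆ I := by
    intro c hc hchain hcne
    obtain ⟨I0, hI0⟩ := hcne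
    refine ⟨⋂₀ c, ⟨⟨isTTIdeal_sInter fun I hI => (hc hI).1.toIsTTIdeal, ?_, ?_⟩,
      (Set.sInter_subset_of_mem hI0).trans (hc hI0).2⟩,
      fun s hs => Set.sInter_subset_of_mem hs⟩
    · intro h
      exact (hc hI0).1.ne_univ
        (Set.eq_univ_of_univ_subset (h ▸ Set.sInter_subset_of_mem hI0))
    · intro a b hab
      by_contra hcon
      push_neg at hcon
      obtain ⟨ha, hb⟩ := hcon
      rw [Set.mem_sInter] at ha hb
      push_neg at ha hb
      obtain ⟨I1, hI1, ha1⟩ := ha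
      obtain ⟨I2, hI2, hb2⟩ := hb
      rcases hchain.total hI1 hI2 with h | h
      · have hb1 : b ∉ I1 := fun hx => hb2 (h hx)
        rcases (hc hI1).1.mem_or_mem a b (Set.sInter_subset_of_mem hI1 hab) with h' | h'
        · exact ha1 h'
        · exact hb1 h'
      · have ha2 : a ∉ I2 := fun hx => ha1 (h hx)
        rcases (hc hI2).1.mem_or_mem a b (Set.sInter_subset_of_mem hI2 hab) with h' | h'
        · exact ha2 h'
        · exact hb2 h'
  obtain ⟨m, hm0, hmin⟩ := zorn_superset_nonempty
      {P : Set C | IsPrimeTTIdeal P ∧ P ⊆ P0} hchain P0 ⟨h0, subset_rfl⟩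
  exact ⟨m, hmin.1.1, hm0,
    fun Q hQ hQm => subset_antisymm hQm (hmin.2 ⟨hQ, hQm.trans hm0⟩ hQm)⟩

lemma opow_add_iso (x : C) (n m : ℕ) :
    Nonempty (opow x (n + m) ≅ opow x n ⊗ opow x m) := by
  induction m with
  | zero => exact ⟨(ρ_ (opow x n)).symm⟩
  | succ m ih =>
    obtain ⟨e⟩ := ih
    exact ⟨whiskerRightIso e x ≪≫ α_ _ _ _⟩

lemma mem_of_opow_mem {P : Set C} (hP : IsPrimeTTIdeal P) (x : C) :
    ∀ n : ℕ, 1 ≤ n → opow x n ∈ P → x ∈ P := by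
  intro n
  induction n with
  | zero => intro h; omega
  | succ n ih =>
    intro _ h
    rcases hP.mem_or_mem _ _ h with h1 | h2
    · rcases n with _ | n
      · exact absurd (eq_univ_of_one_mem hP.toIsTTIdeal h1) hP.ne_univ
      · exact ih (by omega) h1
    · exact h2

end General

section Topology

variable {K : Type u} [Category.{v} K] [HasZeroObject K] [Preadditive K]
  [HasShift K ℤ] [∀ n : ℤ, (shiftFunctor K n).Additive] [Pretriangulated K]
  [MonoidalCategory K]

lemma isOpen_basic (x : K) : IsOpen {P : Spc K | x ∈ P.1} :=
  TopologicalSpace.GenerateOpen.basic _ ⟨x, rfl⟩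

lemma closure_singleton (P : Spc K) :
    closure ({P} : Set (Spc K)) = {Q : Spc K | Q.1 ⊆ P.1} := by
  apply subset_antisymm
  · apply closure_minimal
    · intro R hR
      rw [Set.mem_singleton_iff] at hR
      subst hR
      exact fun x hx => hx
    · rw [← isOpen_compl_iff]
      have he : {Q : Spc K | Q.1 ⊆ P.1}ᶜ =
          ⋃ x ∈ {x : K | x ∉ P.1}, {Q : Spc K | x ∈ Q.1} := by
        ext Q
        simp only [Set.mem_compl_iff, Set.mem_setOf_eq, Set.not_subset, Set.mem_iUnion]
        constructor
        · rintro ⟨x, hxQ, hxP⟩; exact ⟨x, hxP, hxQ⟩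
        · rintro ⟨x, hxP, hxQ⟩; exact ⟨x, hxQ, hxP⟩
      rw [he]
      exact isOpen_biUnion fun x _ => isOpen_basic x
  · intro Q hQ
    rw [mem_closure_iff]
    intro U hU hQU
    have hgen : ∀ V : Set (Spc K),
        TopologicalSpace.GenerateOpen {U | ∃ x : K, U = {P : Spc K | x ∈ P.1}} V →
        Q ∈ V → P ∈ V := by
      intro V hV
      induction hV with
      | basic s hs =>
        obtain ⟨x, rfl⟩ := hs
        exact fun h => hQ h
      | univ => exact fun _ => trivial
      | inter s t _ _ ihs iht => exact fun h => ⟨ihs h.1, iht h.2⟩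
      | sUnion 𝒯 _ ih => rintro ⟨s, hs, hQs⟩; exact ⟨s, hs, ih s hs hQs⟩
    exact ⟨P, hgen U hU hQU, rfl⟩

end Topology

section Preimage

variable {K : Type u} [Category.{v} K] [HasZeroObject K] [Preadditive K]
  [HasShift K ℤ] [∀ n : ℤ, (shiftFunctor K n).Additive] [Pretriangulated K]
  [MonoidalCategory K]
variable {L : Type u'} [Category.{v'} L] [HasZeroObject L] [Preadditive L]
  [HasShift L ℤ] [∀ n : ℤ, (shiftFunctor L n).Additive] [Pretriangulated L]
  [MonoidalCategory L]

lemma preimage_prime (F : K ⥤ L) [F.CommShift ℤ] [F.IsTriangulated] [F.Monoidal]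
    {Q : Set L} (hQ : IsPrimeTTIdeal Q) : IsPrimeTTIdeal {x : K | F.obj x ∈ Q} := by
  have hFzero : IsZero (F.obj (0 : K)) := by
    have hd := F.map_distinguished _ (contractible_distinguished (0 : K))
    have h1 : IsIso ((F.mapTriangle.obj (contractibleTriangle (0 : K))).mor₁) := by
      have : (F.mapTriangle.obj (contractibleTriangle (0 : K))).mor₁ = 𝟙 _ := by
        show F.map (𝟙 (0:K)) = 𝟙 (F.obj 0)
        rw [F.map_id]
      rw [this]
      exact IsIso.id _
    exact Triangle.isZero₃_of_isIso₁ _ hd h1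
  refine ⟨⟨?_, ?_, ?_, ?_, ?_, ?_⟩, ?_, ?_⟩
  · exact hQ.toIsTTIdeal.mem_of_isZero hFzero
  · intro n x hx
    exact hQ.toIsTTIdeal.mem_of_iso ((F.commShiftIso n).app x)
      (hQ.shift_mem n _ hx)
  · intro T hT h1 h2
    exact hQ.cone_mem _ (F.map_distinguished T hT) h1 h2
  · intro x z hz i r hir
    exact hQ.retract_mem _ _ hz (F.map i) (F.map r)
      (by rw [← F.map_comp, hir, F.map_id])
  · intro x hx y
    exact hQ.toIsTTIdeal.mem_of_iso (Functor.Monoidal.μIso F x y).symm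
      (hQ.tensor_mem _ hx (F.obj y))
  · intro x hx y
    exact hQ.toIsTTIdeal.mem_of_iso (Functor.Monoidal.μIso F y x).symm
      (hQ.tensor_mem' _ hx (F.obj y))
  · intro h
    have h1 : (𝟙_ K) ∈ {x : K | F.obj x ∈ Q} := h.symm ▸ Set.mem_univ _
    have h2 : (𝟙_ L) ∈ Q :=
      hQ.toIsTTIdeal.mem_of_iso (Functor.Monoidal.εIso F) h1
    exact hQ.ne_univ (eq_univ_of_one_mem hQ.toIsTTIdeal h2)
  · intro x y h
    exact hQ.mem_or_mem _ _
      (hQ.toIsTTIdeal.mem_of_iso (Functor.Monoidal.μIso F x y) h)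

end Preimage

end TT


variable {K : Type u} [Category.{v} K] [HasZeroObject K] [Preadditive K]
  [HasShift K ℤ] [∀ n : ℤ, (shiftFunctor K n).Additive] [Pretriangulated K]
  [MonoidalCategory K] [SymmetricCategory K] [EssentiallySmall.{v} K]
variable {L : Type u'} [Category.{v'} L] [HasZeroObject L] [Preadditive L]
  [HasShift L ℤ] [∀ n : ℤ, (shiftFunctor L n).Additive] [Pretriangulated L]
  [MonoidalCategory L] [SymmetricCategory L] [EssentiallySmall.{v'} L]

/-- **Theorem (Balmer).** Let `K`, `L` be essentially small tt-categories (`K` not assumed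
rigid) and `F : K ⥤ L` a tt-functor. Then `F` detects ⊗-nilpotence of objects
(`F(x) ≅ 0 ⟹ x^⊗n ≅ 0` for some `n ≥ 1`) if and only if the induced map
`φ = Spc F : Spc L → Spc K`, `Q ↦ F⁻¹(Q)`, is surjective on closed points. -/
theorem detects_object_nilpotence_iff_surjective_on_closed_points
    (hK : TensorExact K) (hL : TensorExact L)
    (F : K ⥤ L) [F.CommShift ℤ] [F.IsTriangulated] [F.Monoidal] :
    (∀ x : K, IsZero (F.obj x) → ∃ n : ℕ, 1 ≤ n ∧ IsZero (opow x n)) ↔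
      (∀ P : Spc K, IsClosed ({P} : Set (Spc K)) →
        ∃ Q : Spc L, {x : K | F.obj x ∈ Q.1} = P.1) := by
  constructor
  · -- (a') implies (b)
    intro ha P hclosed
    have hmin : ∀ Q : Spc K, Q.1 ⊆ P.1 → Q = P := by
      intro Q hQ
      have h1 : Q ∈ closure ({P} : Set (Spc K)) := by
        rw [TT.closure_singleton]; exact hQ
      rwa [hclosed.closure_eq] at h1
    have h1K : (𝟙_ K) ∉ P.1 :=
      fun h => P.2.ne_univ (eq_univ_of_one_mem P.2.toIsTTIdeal h)
    have hmulS : ∀ s ∈ {y : L | ∃ x : K, x ∉ P.1 ∧ Nonempty (y ≅ F.obj x)},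
        ∀ t ∈ {y : L | ∃ x : K, x ∉ P.1 ∧ Nonempty (y ≅ F.obj x)},
        ∃ u ∈ {y : L | ∃ x : K, x ∉ P.1 ∧ Nonempty (y ≅ F.obj x)},
          Nonempty (u ≅ s ⊗ t) := by
      rintro s ⟨xs, hxs, ⟨es⟩⟩ t ⟨xt, hxt, ⟨et⟩⟩
      refine ⟨s ⊗ t, ⟨xs ⊗ xt, fun h => ?_,
        ⟨tensorIso es et ≪≫ Functor.Monoidal.μIso F xs xt⟩⟩, ⟨Iso.refl _⟩⟩
      rcases P.2.mem_or_mem _ _ h with h' | h'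
      · exact hxs h'
      · exact hxt h'
    have hnzS : ∀ s ∈ {y : L | ∃ x : K, x ∉ P.1 ∧ Nonempty (y ≅ F.obj x)},
        ¬ IsZero s := by
      rintro s ⟨xx, hxx, ⟨e⟩⟩ hz
      obtain ⟨n, hn1, hzn⟩ := ha xx (hz.of_iso e.symm)
      exact hxx (mem_of_opow_mem P.2 xx n hn1 (P.2.toIsTTIdeal.mem_of_isZero hzn))
    obtain ⟨QL, hQL, hdisj⟩ := exists_prime_disjoint hL
      {y : L | ∃ x : K, x ∉ P.1 ∧ Nonempty (y ≅ F.obj x)}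
      ⟨F.obj (𝟙_ K), 𝟙_ K, h1K, ⟨Iso.refl _⟩⟩ hmulS hnzS
    refine ⟨⟨QL, hQL⟩, ?_⟩
    have hsub : {x : K | F.obj x ∈ QL} ⊆ P.1 := by
      intro x hx
      by_contra hxP
      exact hdisj (F.obj x) ⟨x, hxP, ⟨Iso.refl _⟩⟩ hx
    exact congrArg Subtype.val (hmin ⟨{x : K | F.obj x ∈ QL}, preimage_prime F hQL⟩ hsub)
  · -- (b) implies (a')
    intro hb x hFx
    by_contra hcon
    push_neg at hcon
    have h1 : ¬ IsZero (𝟙_ K) :=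
      fun h => hcon 1 le_rfl (isZero_tensor_left hK x h)
    have hmulS : ∀ s ∈ Set.range (opow x), ∀ t ∈ Set.range (opow x),
        ∃ u ∈ Set.range (opow x), Nonempty (u ≅ s ⊗ t) := by
      rintro s ⟨n, rfl⟩ t ⟨m, rfl⟩
      obtain ⟨e⟩ := opow_add_iso x n m
      exact ⟨opow x (n + m), ⟨n + m, rfl⟩, ⟨e⟩⟩
    have hnzS : ∀ s ∈ Set.range (opow x), ¬ IsZero s := by
      rintro s ⟨n, rfl⟩ hz
      rcases n with _ | n
      · exact h1 hz
      · exact hcon (n+1) (by omega) hz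
    obtain ⟨P0, hP0, hd0⟩ := exists_prime_disjoint hK (Set.range (opow x))
      ⟨𝟙_ K, 0, rfl⟩ hmulS hnzS
    obtain ⟨Pm, hPm, hPm0, hPmin⟩ := exists_minimal_prime hP0
    have hxPm : x ∉ Pm := by
      intro hx
      exact hd0 (opow x 1) ⟨1, rfl⟩ (hPm0 (hPm.toIsTTIdeal.tensor_mem' x hx (𝟙_ K)))
    have hPc : IsClosed ({(⟨Pm, hPm⟩ : Spc K)} : Set (Spc K)) := by
      have hcl : closure ({(⟨Pm, hPm⟩ : Spc K)} : Set (Spc K)) =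
          {(⟨Pm, hPm⟩ : Spc K)} := by
        refine (TT.closure_singleton _).trans ?_
        ext Q
        constructor
        · intro hQ
          exact Subtype.ext (hPmin Q.1 Q.2 hQ)
        · rintro rfl
          exact fun y hy => hy
      rw [← hcl]
      exact isClosed_closure
    obtain ⟨Q, hQ⟩ := hb ⟨Pm, hPm⟩ hPc
    have hmem : x ∈ {y : K | F.obj y ∈ Q.1} := Q.2.toIsTTIdeal.mem_of_isZero hFx
    rw [hQ] at hmem
    exact hxPm hmem
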